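/- In a tree-form sequential decision process, let y ∈ Π be any pure sequence-form strategy, and let w be the recursive weights of the dilated entropy DGF (w_j = 2 + 2·max_a w_{ρ(j,a)}, w_k = Σ_s w_{ρ(k,s)}, w_⋄ = 0). Then for every sequence ja with y_{ja} = 1, Σ_{j'a' ⪰ ja} (w_{j'} y_{j'a'}) / (w_j y_{ja}) ≤ 2, where the sum ranges over all sequences j'a' that are descendants of ja (including ja itself). -/

import Mathlib

inductive TFT : Type where
  | term : TFT
  | dec : (n : ℕ) → (Fin n → TFT) → TFT
  | obs : (n : ℕ) → (Fin n → TFT) → TFT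

namespace TFT

noncomputable def wt : TFT → ℝ
  | term => 0
  | dec _ c => 2 + 2 * (List.ofFn fun i => wt (c i)).foldr max 0
  | obs _ c => ∑ i, wt (c i)

def Seq : TFT → Type
  | term => Empty
  | dec n c => Σ i : Fin n, Option (Seq (c i))
  | obs n c => Σ i : Fin n, Seq (c i)

instance seqFintype : (t : TFT) → Fintype (Seq t)
  | term => inferInstanceAs (Fintype Empty)
  | dec n c => by
      letI := fun i => seqFintype (c i)
      exact inferInstanceAs (Fintype (Σ i : Fin n, Option (Seq (c i))))
  | obs n c => by
      letI := fun i => seqFintype (c i)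
      exact inferInstanceAs (Fintype (Σ i : Fin n, Seq (c i)))

instance seqDecEq : (t : TFT) → DecidableEq (Seq t)
  | term => inferInstanceAs (DecidableEq Empty)
  | dec n c => by
      letI := fun i => seqDecEq (c i)
      exact inferInstanceAs (DecidableEq (Σ i : Fin n, Option (Seq (c i))))
  | obs n c => by
      letI := fun i => seqDecEq (c i)
      exact inferInstanceAs (DecidableEq (Σ i : Fin n, Seq (c i)))

def IsSF : (t : TFT) → (Seq t → ℝ) → ℝ → Prop
  | term, _, _ => True
  | dec _ c, x, par =>
      (∑ i, x ⟨i, none⟩) = par ∧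
      ∀ i, IsSF (c i) (fun s => x ⟨i, some s⟩) (x ⟨i, none⟩)
  | obs _ c, x, par => ∀ i, IsSF (c i) (fun s => x ⟨i, s⟩) par

noncomputable def decW : (t : TFT) → Seq t → ℝ
  | term => fun s => Empty.elim s
  | dec n c => fun σ => match σ with
      | ⟨_, none⟩ => wt (dec n c)
      | ⟨i, some s⟩ => decW (c i) s
  | obs _ c => fun σ => decW (c σ.1) σ.2

noncomputable def succW : (t : TFT) → Seq t → ℝ
  | term => fun s => Empty.elim s
  | dec _ c => fun σ => match σ with
      | ⟨i, none⟩ => wt (c i)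
      | ⟨i, some s⟩ => succW (c i) s
  | obs _ c => fun σ => succW (c σ.1) σ.2

def parent : (t : TFT) → Seq t → Option (Seq t)
  | term => fun s => Empty.elim s
  | dec _ c => fun σ => match σ with
      | ⟨_, none⟩ => none
      | ⟨i, some s⟩ =>
          some (match parent (c i) s with
            | none => ⟨i, none⟩
            | some q => ⟨i, some q⟩)
  | obs _ c => fun σ => (parent (c σ.1) σ.2).map fun q => ⟨σ.1, q⟩

noncomputable def u : (t : TFT) → Seq t → Seq t → ℝ
  | term => fun s => Empty.elim s
  | dec _ c => fun σ σ' => match σ, σ' with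
      | ⟨i, none⟩, ⟨i', _⟩ => if i' = i then 1 else 0
      | ⟨_, some _⟩, ⟨_, none⟩ => 0
      | ⟨i, some s⟩, ⟨i', some s'⟩ => if h : i' = i then u (c i) s (h ▸ s') else 0
  | obs _ c => fun σ σ' =>
      if h : σ'.1 = σ.1 then u (c σ.1) σ.2 (h ▸ σ'.2) else 0

/-- The Hessian of the dilated entropy DGF at a strictly positive sequence-form
strategy `x`, given entrywise. -/
noncomputable def hess (t : TFT) (x : Seq t → ℝ) : Matrix (Seq t) (Seq t) ℝ :=
  fun σ σ' =>
    if σ' = σ then (decW t σ + succW t σ) / x σ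
    else if parent t σ' = some σ then -(decW t σ') / x σ
    else if parent t σ = some σ' then -(decW t σ) / x σ'
    else 0

/-- The dilated entropy distance-generating function. -/
noncomputable def psi : (t : TFT) → (Seq t → ℝ) → ℝ → ℝ
  | term, _, _ => 0
  | dec n c, x, par =>
      wt (dec n c) *
          (par * Real.log n + ∑ i, x ⟨i, none⟩ * Real.log (x ⟨i, none⟩ / par)) +
        ∑ i, psi (c i) (fun s => x ⟨i, some s⟩) (x ⟨i, none⟩)
  | obs _ c, x, par => ∑ i, psi (c i) (fun s => x ⟨i, s⟩) par

/-- The strategy that randomizes uniformly at every decision point. -/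
def IsUniform : (t : TFT) → (Seq t → ℝ) → ℝ → Prop
  | term, _, _ => True
  | dec n c, x, par =>
      (∀ i : Fin n, x ⟨i, none⟩ = par / n) ∧
      ∀ i, IsUniform (c i) (fun s => x ⟨i, some s⟩) (x ⟨i, none⟩)
  | obs _ c, x, par => ∀ i, IsUniform (c i) (fun s => x ⟨i, s⟩) par



lemma sum_seq_dec (n : ℕ) (c : Fin n → TFT) (f : Seq (dec n c) → ℝ) :
    ∑ σ, f σ = ∑ i, (f ⟨i, none⟩ + ∑ s, f ⟨i, some s⟩) := by
  letI := fun i => seqFintype (c i)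
  have h1 : ∑ σ : Σ i : Fin n, Option (Seq (c i)), f σ
      = ∑ i, ∑ o : Option (Seq (c i)), f ⟨i, o⟩ := by
    rw [← Finset.univ_sigma_univ]; exact Finset.sum_sigma _ _ _
  exact h1.trans (Finset.sum_congr rfl fun i _ => Fintype.sum_option _)

lemma sum_seq_obs (n : ℕ) (c : Fin n → TFT) (f : Seq (obs n c) → ℝ) :
    ∑ σ, f σ = ∑ i, ∑ s, f ⟨i, s⟩ := by
  letI := fun i => seqFintype (c i)
  have h1 : ∑ σ : Σ i : Fin n, Seq (c i), f σ = ∑ i, ∑ s : Seq (c i), f ⟨i, s⟩ := by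
    rw [← Finset.univ_sigma_univ]; exact Finset.sum_sigma _ _ _
  exact h1

lemma sum_seq_term (f : Seq term → ℝ) : ∑ σ, f σ = 0 :=
  Finset.sum_eq_zero fun σ _ => (Empty.elim σ)

lemma base_le_foldr_max (l : List ℝ) (b : ℝ) : b ≤ l.foldr max b := by
  induction l with
  | nil => exact le_refl b
  | cons hd tl ih => exact le_trans ih (le_max_right _ _)

lemma mem_le_foldr_max {a : ℝ} (l : List ℝ) (b : ℝ) (h : a ∈ l) : a ≤ l.foldr max b := by
  induction l with
  | nil => simp at h
  | cons hd tl ih =>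
    rcases List.mem_cons.mp h with h | h
    · exact h ▸ le_max_left _ _
    · exact le_trans (ih h) (le_max_right _ _)

theorem wt_nonneg : ∀ t, 0 ≤ wt t
  | term => le_refl 0
  | dec n c => by
      have h := base_le_foldr_max (List.ofFn fun i => wt (c i)) 0
      simp only [wt]; linarith
  | obs n c => by
      simp only [wt]; exact Finset.sum_nonneg fun i _ => wt_nonneg (c i)

lemma wt_child_le (n : ℕ) (c : Fin n → TFT) (i : Fin n) :
    2 + 2 * wt (c i) ≤ wt (dec n c) := by
  have hm : wt (c i) ∈ List.ofFn fun j => wt (c j) := List.mem_ofFn.mpr ⟨i, rfl⟩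
  have h := mem_le_foldr_max _ (0 : ℝ) hm
  simp only [wt]; linarith

theorem decW_two_le : ∀ t (σ : Seq t), 2 ≤ decW t σ
  | term => fun σ => Empty.elim σ
  | dec n c => fun σ => match σ with
      | ⟨i, none⟩ => by
          have h := base_le_foldr_max (List.ofFn fun j => wt (c j)) 0
          simp only [decW, wt]; linarith
      | ⟨i, some s⟩ => by
          simpa only [decW] using decW_two_le (c i) s
  | obs n c => fun σ => by simpa only [decW] using decW_two_le (c σ.1) σ.2

theorem S_le : ∀ t (y : Seq t → ℝ) (p : ℝ), IsSF t y p →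
    (∀ σ, y σ = 0 ∨ y σ = 1) → 0 ≤ p →
    ∑ σ, decW t σ * y σ ≤ 2 * wt t * p
  | term, y, p, _, _, hp => by
      rw [sum_seq_term]
      simp only [wt]
      nlinarith
  | dec n c, y, p, hsf, hpure, hp => by
      obtain ⟨hsum, hrec⟩ := hsf
      rw [sum_seq_dec]
      have key : ∀ i : Fin n,
          (decW (dec n c) ⟨i, none⟩ * y ⟨i, none⟩ +
            ∑ s, decW (dec n c) ⟨i, some s⟩ * y ⟨i, some s⟩)
            ≤ (2 * wt (dec n c) - 2) * y ⟨i, none⟩ := by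
        intro i
        have hy0 : 0 ≤ y ⟨i, none⟩ := by
          rcases hpure ⟨i, none⟩ with h | h <;> rw [h] <;> norm_num
        have hS := S_le (c i) (fun s => y ⟨i, some s⟩) (y ⟨i, none⟩) (hrec i)
            (fun s => hpure ⟨i, some s⟩) hy0
        have hw := wt_child_le n c i
        simp only [decW]
        nlinarith [hS, mul_le_mul_of_nonneg_right hw hy0]
      calc ∑ i, (decW (dec n c) ⟨i, none⟩ * y ⟨i, none⟩ +
            ∑ s, decW (dec n c) ⟨i, some s⟩ * y ⟨i, some s⟩)
          ≤ ∑ i, (2 * wt (dec n c) - 2) * y ⟨i, none⟩ :=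
            Finset.sum_le_sum fun i _ => key i
        _ = (2 * wt (dec n c) - 2) * p := by rw [← Finset.mul_sum, hsum]
        _ ≤ 2 * wt (dec n c) * p := by nlinarith
  | obs n c, y, p, hsf, hpure, hp => by
      rw [sum_seq_obs]
      have key : ∀ i : Fin n,
          (∑ s, decW (obs n c) ⟨i, s⟩ * y ⟨i, s⟩) ≤ 2 * wt (c i) * p := fun i =>
        S_le (c i) (fun s => y ⟨i, s⟩) p (hsf i) (fun s => hpure ⟨i, s⟩) hp
      calc ∑ i, ∑ s, decW (obs n c) ⟨i, s⟩ * y ⟨i, s⟩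
          ≤ ∑ i, 2 * wt (c i) * p := Finset.sum_le_sum fun i _ => key i
        _ = 2 * wt (obs n c) * p := by
            simp only [wt, Finset.mul_sum, Finset.sum_mul]

theorem key_sum_le : ∀ t (y : Seq t → ℝ) (p : ℝ), IsSF t y p →
    (∀ σ, y σ = 0 ∨ y σ = 1) → ∀ σ, y σ = 1 →
    ∑ σ', u t σ σ' * (decW t σ' * y σ') ≤ 2 * decW t σ
  | term, y, p, _, _, σ, _ => Empty.elim σ
  | dec n c, y, p, hsf, hpure, ⟨i, none⟩, hσ => by
      obtain ⟨hsum, hrec⟩ := hsf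
      rw [sum_seq_dec]
      have hterm : ∀ i' : Fin n,
          (u (dec n c) ⟨i, none⟩ ⟨i', none⟩ *
              (decW (dec n c) ⟨i', none⟩ * y ⟨i', none⟩) +
            ∑ s, u (dec n c) ⟨i, none⟩ ⟨i', some s⟩ *
              (decW (dec n c) ⟨i', some s⟩ * y ⟨i', some s⟩))
          = if i' = i then
              (wt (dec n c) * y ⟨i, none⟩ + ∑ s, decW (c i) s * y ⟨i, some s⟩)
            else 0 := by
        intro i'
        by_cases h : i' = i
        · subst h; simp [u, decW]
        · simp [u, decW, h]
      rw [Finset.sum_congr rfl fun i' _ => hterm i',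
        Finset.sum_ite_eq' Finset.univ i, if_pos (Finset.mem_univ i), hσ, mul_one]
      have hy0 : (0 : ℝ) ≤ y ⟨i, none⟩ := by rw [hσ]; norm_num
      have hS := S_le (c i) (fun s => y ⟨i, some s⟩) (y ⟨i, none⟩) (hrec i)
          (fun s => hpure ⟨i, some s⟩) hy0
      rw [hσ, mul_one] at hS
      have hw := wt_child_le n c i
      simp only [decW]
      linarith
  | dec n c, y, p, hsf, hpure, ⟨i, some s⟩, hσ => by
      obtain ⟨hsum, hrec⟩ := hsf
      rw [sum_seq_dec]
      have hterm : ∀ i' : Fin n,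
          (u (dec n c) ⟨i, some s⟩ ⟨i', none⟩ *
              (decW (dec n c) ⟨i', none⟩ * y ⟨i', none⟩) +
            ∑ s', u (dec n c) ⟨i, some s⟩ ⟨i', some s'⟩ *
              (decW (dec n c) ⟨i', some s'⟩ * y ⟨i', some s'⟩))
          = if i' = i then
              (∑ s', u (c i) s s' * (decW (c i) s' * y ⟨i, some s'⟩))
            else 0 := by
        intro i'
        by_cases h : i' = i
        · subst h; simp [u, decW]
        · simp [u, decW, h]
      rw [Finset.sum_congr rfl fun i' _ => hterm i',
        Finset.sum_ite_eq' Finset.univ i, if_pos (Finset.mem_univ i)]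
      simp only [decW]
      exact key_sum_le (c i) (fun s' => y ⟨i, some s'⟩) (y ⟨i, none⟩) (hrec i)
        (fun s' => hpure ⟨i, some s'⟩) s hσ
  | obs n c, y, p, hsf, hpure, ⟨i, s⟩, hσ => by
      rw [sum_seq_obs]
      have hterm : ∀ i' : Fin n,
          (∑ s', u (obs n c) ⟨i, s⟩ ⟨i', s'⟩ *
              (decW (obs n c) ⟨i', s'⟩ * y ⟨i', s'⟩))
          = if i' = i then
              (∑ s', u (c i) s s' * (decW (c i) s' * y ⟨i, s'⟩))
            else 0 := by
        intro i'
        by_cases h : i' = i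
        · subst h; simp [u, decW]
        · simp [u, decW, h]
      rw [Finset.sum_congr rfl fun i' _ => hterm i',
        Finset.sum_ite_eq' Finset.univ i, if_pos (Finset.mem_univ i)]
      simp only [decW]
      exact key_sum_le (c i) (fun s' => y ⟨i, s'⟩) p (hsf i)
        (fun s' => hpure ⟨i, s'⟩) s hσ

/-- For a pure sequence-form strategy `y` and any sequence `σ = ja` with `y_{ja} = 1`,
`Σ_{j'a' ⪰ ja} (w_{j'} y_{j'a'}) / (w_j y_{ja}) ≤ 2`. -/
theorem pure_weighted_descendant_sum_le_two (t : TFT) (y : Seq t → ℝ)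
    (hsf : IsSF t y 1) (hpure : ∀ σ, y σ = 0 ∨ y σ = 1)
    (σ : Seq t) (hσ : y σ = 1) :
    ∑ σ', u t σ σ' * (decW t σ' * y σ' / (decW t σ * y σ)) ≤ 2 := by
  have hpos : 0 < decW t σ * y σ := by
    rw [hσ, mul_one]; linarith [decW_two_le t σ]
  have hkey := key_sum_le t y 1 hsf hpure σ hσ
  have hrw : ∑ σ', u t σ σ' * (decW t σ' * y σ' / (decW t σ * y σ))
      = (∑ σ', u t σ σ' * (decW t σ' * y σ')) / (decW t σ * y σ) := by
    rw [Finset.sum_div]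
    exact Finset.sum_congr rfl fun σ' _ => (mul_div_assoc _ _ _).symm
  rw [hrw, div_le_iff₀ hpos, hσ, mul_one]
  exact hkey

end TFT
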